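/- Let T_∘ ⊆ AGL(V,+) with τ_x = κ_x σ_x for each x, and let λ ∈ GL(V,+). Then λ ∈ GL(V,∘) if and only if κ_x λ = λ κ_{xλ} for all x ∈ V. -/
import Mathlib


/-- With `x ∘ y = κ_y x + y` (`κ_y ∈ GL(V,+)` the linear part of the
translation `τ_y ∈ T∘ ⊆ AGL(V,+)`) and `f ∈ GL(V,+)`, one has `f ∈ GL(V,∘)` iff
`κ_x f = f κ_{x f}` for all `x`, i.e. `f (κ_y x) = κ_{f y} (f x)` for all `x, y`. -/
theorem stmt18 (N : ℕ)
    (circ : (Fin N → ZMod 2) → (Fin N → ZMod 2) → (Fin N → ZMod 2))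
    (κ : (Fin N → ZMod 2) → ((Fin N → ZMod 2) ≃ₗ[ZMod 2] (Fin N → ZMod 2)))
    (hκ : ∀ x y, circ x y = κ y x + y)
    (f : (Fin N → ZMod 2) ≃ₗ[ZMod 2] (Fin N → ZMod 2)) :
    (∀ x y, f (circ x y) = circ (f x) (f y)) ↔
    (∀ x y, f (κ y x) = κ (f y) (f x)) := by
  constructor
  · intro h x y
    have := h x y
    simp only [hκ, map_add] at this
    simpa using this
  · intro h x y
    simp [hκ, map_add, h x y]
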